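/- Let 𝐏 ⊂ ℤ^n be a finite set with P = Conv(𝐏), and let D_1, …, D_n be daughter polytopes of 𝐏 that are semi-interlaced in 𝐏. Then for every suture S ∈ Θ(P), the polytopes {D_i ∩ S : D_i ∩ S ≠ ∅} (there are exactly dim(S) of them) are semi-interlaced daughter polytopes of the finite set 𝐏 ∩ S, regarded inside aff(S). -/

import Mathlib

open Pointwise Filter
open scoped Classical

noncomputable section

def intLattice (n : ℕ) : AddSubgroup (Fin n → ℝ) where
  carrier := {x | ∀ i, ∃ m : ℤ, x i = (m : ℝ)}
  zero_mem' := fun i => ⟨0, by simp⟩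
  add_mem' := by
    intro a b ha hb i
    obtain ⟨p, hp⟩ := ha i
    obtain ⟨q, hq⟩ := hb i
    exact ⟨p + q, by simp [hp, hq]⟩
  neg_mem' := by
    intro a ha i
    obtain ⟨p, hp⟩ := ha i
    exact ⟨-p, by simp [hp]⟩

/-- Lattice volume (normalized so that a unit simplex of the lattice `L` has
volume `1`) of a `k`-dimensional set `Q`, defined via asymptotic counting of
lattice points in dilations of `Q`. -/
def latVol {E : Type*} [AddCommGroup E] [Module ℝ E] (L : AddSubgroup E)
    (k : ℕ) (Q : Set E) : ℝ :=
  Filter.limsup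
    (fun t : ℕ => (Nat.factorial k : ℝ) *
      (Nat.card ↥(((t : ℝ) • Q) ∩ (L : Set E))) / (t : ℝ) ^ k) Filter.atTop

/-- Mixed volume of the polytopes `Q i`, `i ∈ T`, via inclusion-exclusion of
lattice volumes of Minkowski sums. -/
def mixedVol {E : Type*} [AddCommGroup E] [Module ℝ E] {ι : Type*}
    (L : AddSubgroup E) (T : Finset ι) (Q : ι → Set E) : ℝ :=
  ∑ I ∈ T.powerset,
    if I.Nonempty then
      (-1 : ℝ) ^ (T.card - I.card) * latVol L T.card (∑ i ∈ I, Q i)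
    else 0

/-- `F` is a face of `P`: the set of maximizers over `P` of some linear functional. -/
def IsFaceOf {E : Type*} [AddCommGroup E] [Module ℝ E] (P F : Set E) : Prop :=
  ∃ ξ : E →ₗ[ℝ] ℝ, F = {x ∈ P | ∀ y ∈ P, ξ y ≤ ξ x}

/-- Dimension of (the affine span of) a set. -/
def sdim {E : Type*} [AddCommGroup E] [Module ℝ E] (Q : Set E) : ℕ :=
  Module.finrank ℝ (vectorSpan ℝ Q)

/-- The family D-family: faces of `P` maximal among the faces disjoint from `D`. -/
def DFam {E : Type*} [AddCommGroup E] [Module ℝ E] (P D : Set E) : Set (Set E) :=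
  {F | Maximal (fun G => IsFaceOf P G ∧ G ∩ D = ∅) F}

/-- `D` is a daughter polytope of the finite set `A`. -/
def IsDaughter {E : Type*} [AddCommGroup E] [Module ℝ E] (A : Finset E) (D : Set E) : Prop :=
  D.Nonempty ∧
  (∀ F ∈ DFam (convexHull ℝ (A : Set E)) D, ∀ F' ∈ DFam (convexHull ℝ (A : Set E)) D,
    F ≠ F' → F ∩ F' = ∅) ∧
  D = convexHull ℝ ((A : Set E) \ ⋃ F ∈ DFam (convexHull ℝ (A : Set E)) D, F)

/-- The daughter polytopes `D i`, `i ∈ T`, are semi-interlaced in `A`. -/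
def SemiInterlaced {E : Type*} [AddCommGroup E] [Module ℝ E] {ι : Type*}
    (A : Finset E) (T : Finset ι) (D : ι → Set E) : Prop :=
  (∀ i ∈ T, IsDaughter A (D i)) ∧
  ∀ F, IsFaceOf (convexHull ℝ (A : Set E)) F →
    sdim F ≤ (T.filter fun i => (D i ∩ F).Nonempty).card

/-- A face `F` of `Conv A` is a suture if exactly `dim F` of the `D i` meet it. -/
def IsSuture {E : Type*} [AddCommGroup E] [Module ℝ E] {ι : Type*}
    (A : Finset E) (T : Finset ι) (D : ι → Set E) (F : Set E) : Prop :=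
  IsFaceOf (convexHull ℝ (A : Set E)) F ∧
  (T.filter fun i => (D i ∩ F).Nonempty).card = sdim F


section Aux

variable {E : Type*} [AddCommGroup E] [Module ℝ E]

lemma isFaceOf_subset {P F : Set E} (h : IsFaceOf P F) : F ⊆ P := by
  obtain ⟨ξ, rfl⟩ := h; exact fun x hx => hx.1

lemma isFaceOf_convex {P F : Set E} (hP : Convex ℝ P) (h : IsFaceOf P F) : Convex ℝ F := by
  obtain ⟨ξ, rfl⟩ := h
  intro x hx y hy a b ha hb hab
  refine ⟨hP hx.1 hy.1 ha hb hab, fun z hz => ?_⟩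
  have h1 := hx.2 z hz
  have h2 := hy.2 z hz
  have hmap : ξ (a • x + b • y) = a * ξ x + b * ξ y := by
    simp [map_add, map_smul, smul_eq_mul]
  rw [hmap]
  calc ξ z = a * ξ z + b * ξ z := by rw [← add_mul, hab, one_mul]
    _ ≤ a * ξ x + b * ξ y :=
      add_le_add (mul_le_mul_of_nonneg_left h1 ha) (mul_le_mul_of_nonneg_left h2 hb)

lemma hull_le {A : Finset E} (ξ : E →ₗ[ℝ] ℝ) {M : ℝ} (h : ∀ a ∈ A, ξ a ≤ M) :
    ∀ x ∈ convexHull ℝ (A : Set E), ξ x ≤ M := fun x hx =>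
  convexHull_min (fun a ha => h a ha) (convex_halfSpace_le ξ.isLinear M) hx

/-- The key lemma: a point of a face `S` lying in the hull of `C ⊆ Conv A` lies in
the hull of `C ∩ S`. -/
lemma mem_convexHull_inter_face {A C : Finset E}
    (hC : (C : Set E) ⊆ convexHull ℝ (A : Set E))
    {S : Set E} (hS : IsFaceOf (convexHull ℝ (A : Set E)) S)
    {x : E} (hx : x ∈ convexHull ℝ (C : Set E)) (hxS : x ∈ S) :
    x ∈ convexHull ℝ ((C : Set E) ∩ S) := by
  obtain ⟨ξ, hSd⟩ := hS
  rw [hSd] at hxS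
  obtain ⟨hxP, hxmax⟩ := hxS
  rw [Finset.convexHull_eq] at hx
  obtain ⟨w, hw0, hw1, hwx⟩ := hx
  have hxc : x = ∑ c ∈ C, w c • c := by
    rw [← hwx, Finset.centerMass_eq_of_sum_1 _ _ hw1]; simp
  have hxi : ξ x = ∑ c ∈ C, w c * ξ c := by
    rw [hxc, map_sum]; simp [smul_eq_mul]
  have hle : ∀ c ∈ C, ξ c ≤ ξ x := fun c hc => hxmax c (hC hc)
  have hzero : ∑ c ∈ C, w c * (ξ x - ξ c) = 0 := by
    simp only [mul_sub]
    rw [Finset.sum_sub_distrib, ← Finset.sum_mul, hw1, one_mul, ← hxi, sub_self]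
  have hkey : ∀ c ∈ C, w c ≠ 0 → c ∈ S := by
    intro c hc hwc
    have hterm := (Finset.sum_eq_zero_iff_of_nonneg (fun c hc =>
      mul_nonneg (hw0 c hc) (sub_nonneg.mpr (hle c hc)))).mp hzero c hc
    have hxc' : ξ c = ξ x := by
      rcases mul_eq_zero.mp hterm with h | h
      · exact absurd h hwc
      · linarith [sub_eq_zero.mp h]
    rw [hSd]
    exact ⟨hC hc, fun y hy => (hxmax y hy).trans_eq hxc'.symm⟩
  rw [← hwx, ← Finset.centerMass_filter_ne_zero]
  refine Finset.centerMass_mem_convexHull _ (fun i hi => hw0 i (Finset.mem_filter.mp hi).1)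
    (by rw [Finset.sum_filter_ne_zero, hw1]; norm_num) (fun i hi => ?_)
  obtain ⟨hiC, hiw⟩ := Finset.mem_filter.mp hi
  exact ⟨hiC, hkey i hiC hiw⟩

lemma isFaceOf_eq_convexHull_inter {A : Finset E} {S : Set E}
    (hS : IsFaceOf (convexHull ℝ (A : Set E)) S) :
    S = convexHull ℝ ((A : Set E) ∩ S) := by
  apply Set.Subset.antisymm
  · intro x hx
    exact mem_convexHull_inter_face (subset_convexHull ℝ _) hS (isFaceOf_subset hS hx) hx
  · exact convexHull_min Set.inter_subset_right (isFaceOf_convex (convex_convexHull ℝ _) hS)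

lemma coe_filter_mem {A : Finset E} {S : Set E} :
    ((A.filter (· ∈ S) : Finset E) : Set E) = (A : Set E) ∩ S := by
  ext a; simp [Set.mem_inter_iff]

lemma convexHull_filter_eq {A : Finset E} {S : Set E}
    (hS : IsFaceOf (convexHull ℝ (A : Set E)) S) :
    convexHull ℝ ((A.filter (· ∈ S) : Finset E) : Set E) = S := by
  rw [coe_filter_mem]; exact (isFaceOf_eq_convexHull_inter hS).symm

lemma isFaceOf_nonempty {A : Finset E} (hA : A.Nonempty) {S : Set E}
    (hS : IsFaceOf (convexHull ℝ (A : Set E)) S) : S.Nonempty := by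
  obtain ⟨ξ, rfl⟩ := hS
  obtain ⟨a₀, ha₀A, ha₀⟩ := A.exists_max_image ξ hA
  exact ⟨a₀, subset_convexHull ℝ _ ha₀A, fun y hy => hull_le ξ ha₀ y hy⟩

/-- A face of a face is a face. -/
lemma isFaceOf_trans {A : Finset E} {S F : Set E}
    (hS : IsFaceOf (convexHull ℝ (A : Set E)) S)
    (hAS : (A.filter (· ∈ S)).Nonempty)
    (hF : IsFaceOf (convexHull ℝ ((A.filter (· ∈ S) : Finset E) : Set E)) F) :
    IsFaceOf (convexHull ℝ (A : Set E)) F := by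
  have hA : A.Nonempty := hAS.mono (A.filter_subset _)
  have hconvS : convexHull ℝ ((A.filter (· ∈ S) : Finset E) : Set E) = S :=
    convexHull_filter_eq hS
  obtain ⟨ξ, hSd⟩ := hS
  obtain ⟨η, hFd⟩ := hF
  obtain ⟨a₀, ha₀A, ha₀⟩ := A.exists_max_image ξ hA
  obtain ⟨s₀, hs₀A, hs₀⟩ := (A.filter (· ∈ S)).exists_max_image η hAS
  set M := ξ a₀ with hM
  set N := η s₀ with hN
  have hMP : ∀ x ∈ convexHull ℝ (A : Set E), ξ x ≤ M := hull_le ξ ha₀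
  have hSsub : S ⊆ convexHull ℝ (A : Set E) := isFaceOf_subset ⟨ξ, hSd⟩
  have hSM : ∀ x ∈ S, ξ x = M := by
    intro x hx
    rw [hSd] at hx
    exact le_antisymm (hMP x hx.1) (hx.2 a₀ (subset_convexHull ℝ _ ha₀A))
  have hNS : ∀ x ∈ S, η x ≤ N := by
    intro x hx
    rw [← hconvS] at hx
    exact hull_le η hs₀ x hx
  have hmem : ∀ {z : E}, z ∈ convexHull ℝ ((A.filter (· ∈ S) : Finset E) : Set E) ↔ z ∈ S := by
    intro z; rw [hconvS]
  have hFsubS : F ⊆ S := by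
    rw [hFd]; exact fun x hx => hmem.mp hx.1
  have hFN : ∀ x ∈ F, η x = N := by
    intro x hx
    refine le_antisymm (hNS x (hFsubS hx)) ?_
    rw [hFd] at hx
    exact hx.2 s₀ (subset_convexHull ℝ _ hs₀A)
  -- choice of ε
  set bad := A.filter (fun a => ξ a < M) with hbaddef
  set ε : ℝ := if h : bad.Nonempty then bad.inf' h (fun a => (M - ξ a) / (1 + |η a - N|)) else 1
    with hεdef
  have hε : 0 < ε := by
    rw [hεdef]
    split
    · next h =>
      rw [Finset.lt_inf'_iff]
      intro b hb
      have hbM : ξ b < M := (Finset.mem_filter.mp hb).2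
      have : (0:ℝ) < 1 + |η b - N| := by positivity
      exact div_pos (by linarith) this
    · norm_num
  have hbad : ∀ a ∈ A, ξ a < M → ξ a + ε * η a < M + ε * N := by
    intro a haA haM
    have hb : a ∈ bad := Finset.mem_filter.mpr ⟨haA, haM⟩
    have hbne : bad.Nonempty := ⟨a, hb⟩
    have hεle : ε ≤ (M - ξ a) / (1 + |η a - N|) := by
      rw [hεdef, dif_pos hbne]
      exact Finset.inf'_le _ hb
    have hd : (0:ℝ) < 1 + |η a - N| := by positivity
    have h1 : ε * (1 + |η a - N|) ≤ M - ξ a := by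
      rw [← le_div_iff₀ hd]; exact hεle
    have h2 : ε * (η a - N) ≤ ε * |η a - N| :=
      mul_le_mul_of_nonneg_left (le_abs_self _) hε.le
    have h3 : ε * |η a - N| < ε * (1 + |η a - N|) :=
      mul_lt_mul_of_pos_left (by linarith [abs_nonneg (η a - N)]) hε
    nlinarith
  have hgood : ∀ a ∈ A, ξ a = M → a ∈ S ∧ η a ≤ N := by
    intro a haA haM
    have haS : a ∈ S := by
      rw [hSd]
      exact ⟨subset_convexHull ℝ _ haA, fun y hy => (hMP y hy).trans_eq haM.symm⟩
    exact ⟨haS, hs₀ a (Finset.mem_filter.mpr ⟨haA, haS⟩)⟩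
  set ξ' : E →ₗ[ℝ] ℝ := ξ + ε • η with hξ'
  have hξ'app : ∀ x, ξ' x = ξ x + ε * η x := by
    intro x; simp [hξ', smul_eq_mul]
  have hbound : ∀ a ∈ A, ξ' a ≤ M + ε * N := by
    intro a haA
    rw [hξ'app]
    rcases lt_or_eq_of_le (hMP a (subset_convexHull ℝ _ haA)) with h | h
    · exact (hbad a haA h).le
    · have := (hgood a haA h).2
      have : ε * η a ≤ ε * N := mul_le_mul_of_nonneg_left this hε.le
      linarith
  have hPbound : ∀ x ∈ convexHull ℝ (A : Set E), ξ' x ≤ M + ε * N := hull_le ξ' hbound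
  have hF'val : ∀ x ∈ F, ξ' x = M + ε * N := by
    intro x hx
    rw [hξ'app, hSM x (hFsubS hx), hFN x hx]
  obtain ⟨f₀, hf₀⟩ : F.Nonempty := isFaceOf_nonempty hAS ⟨η, hFd⟩
  refine ⟨ξ', Set.Subset.antisymm ?_ ?_⟩
  · -- F ⊆ ξ'-face
    intro x hx
    refine ⟨hSsub (hFsubS hx), fun y hy => (hPbound y hy).trans_eq (hF'val x hx).symm⟩
  · -- ξ'-face ⊆ F
    intro x hx
    have hGface : IsFaceOf (convexHull ℝ (A : Set E))
        {z ∈ convexHull ℝ (A : Set E) | ∀ y ∈ convexHull ℝ (A : Set E), ξ' y ≤ ξ' z} :=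
      ⟨ξ', rfl⟩
    have hxG : x ∈ convexHull ℝ ((A : Set E) ∩
        {z ∈ convexHull ℝ (A : Set E) | ∀ y ∈ convexHull ℝ (A : Set E), ξ' y ≤ ξ' z}) :=
      mem_convexHull_inter_face (subset_convexHull ℝ _) hGface hx.1 hx
    have hsub : (A : Set E) ∩
        {z ∈ convexHull ℝ (A : Set E) | ∀ y ∈ convexHull ℝ (A : Set E), ξ' y ≤ ξ' z} ⊆ F := by
      rintro a ⟨haA, haP, hamax⟩
      have haval : ξ' a = M + ε * N := by
        refine le_antisymm (hbound a haA) ?_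
        exact (hF'val f₀ hf₀) ▸ hamax f₀ (hSsub (hFsubS hf₀))
      have haM : ξ a = M := by
        by_contra hne
        have hlt : ξ a < M := lt_of_le_of_ne (hMP a (subset_convexHull ℝ _ haA)) hne
        have := hbad a haA hlt
        rw [hξ'app] at haval
        linarith
      obtain ⟨haS, haN⟩ := hgood a haA haM
      have haN' : η a = N := by
        rw [hξ'app, haM] at haval
        have : ε * η a = ε * N := by linarith
        exact mul_left_cancel₀ hε.ne' this
      rw [hFd]
      refine ⟨hmem.mpr haS, fun y hy => ?_⟩
      rw [haN']
      exact hNS y (hmem.mp hy)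
    exact convexHull_min hsub (isFaceOf_convex (convex_convexHull ℝ _) ⟨η, hFd⟩) hxG

/-- intersection of two faces is a face, provided it is nonempty. -/
lemma isFaceOf_inter {P F G : Set E} (hF : IsFaceOf P F) (hG : IsFaceOf P G)
    (hne : (F ∩ G).Nonempty) : IsFaceOf P (F ∩ G) := by
  obtain ⟨ξ, rfl⟩ := hF
  obtain ⟨η, rfl⟩ := hG
  obtain ⟨z, hzF, hzG⟩ := hne
  refine ⟨ξ + η, Set.Subset.antisymm ?_ ?_⟩
  · rintro x ⟨⟨hxP, hxξ⟩, _, hxη⟩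
    exact ⟨hxP, fun y hy => by
      simp only [LinearMap.add_apply]; exact add_le_add (hxξ y hy) (hxη y hy)⟩
  · rintro x ⟨hxP, hmax⟩
    have h1 : ξ x ≤ ξ z := hzF.2 x hxP
    have h2 : η x ≤ η z := hzG.2 x hxP
    have h3 : ξ z + η z ≤ ξ x + η x := by
      have := hmax z hzF.1
      simpa using this
    constructor
    · exact ⟨hxP, fun y hy => (hzF.2 y hy).trans (by linarith)⟩
    · exact ⟨hxP, fun y hy => (hzG.2 y hy).trans (by linarith)⟩

/-- A nonempty face of `Conv A` contained in a face `S` is a face of `S`. -/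
lemma isFaceOf_face_of_subset {A : Finset E} {S G : Set E}
    (hS : IsFaceOf (convexHull ℝ (A : Set E)) S)
    (hG : IsFaceOf (convexHull ℝ (A : Set E)) G)
    (hGS : G ⊆ S) (hGne : G.Nonempty) :
    IsFaceOf (convexHull ℝ ((A.filter (· ∈ S) : Finset E) : Set E)) G := by
  have hconvS : convexHull ℝ ((A.filter (· ∈ S) : Finset E) : Set E) = S :=
    convexHull_filter_eq hS
  obtain ⟨η, hGd⟩ := hG
  obtain ⟨g, hg⟩ := hGne
  refine ⟨η, ?_⟩
  rw [hconvS]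
  apply Set.Subset.antisymm
  · intro x hx
    have hx' := hGd ▸ hx
    exact ⟨hGS hx, fun y hy => hx'.2 y (isFaceOf_subset hS hy)⟩
  · rintro x ⟨hxS, hmax⟩
    have hg' := hGd ▸ hg
    rw [hGd]
    exact ⟨isFaceOf_subset hS hxS, fun y hy => (hg'.2 y hy).trans (hmax g (hGS hg))⟩

/-- Every face disjoint from `D` is contained in a maximal such face. -/
lemma exists_maximal_face {A : Finset E} {D G : Set E}
    (hG : IsFaceOf (convexHull ℝ (A : Set E)) G) (hdisj : G ∩ D = ∅) :
    ∃ F ∈ DFam (convexHull ℝ (A : Set E)) D, G ⊆ F := by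
  set 𝒮 : Set (Set E) :=
    {H | (IsFaceOf (convexHull ℝ (A : Set E)) H ∧ H ∩ D = ∅) ∧ G ⊆ H} with h𝒮
  have hfin : 𝒮.Finite := by
    have himg : ((fun B : Finset E => convexHull ℝ (B : Set E)) ''
        ((A.powerset : Finset (Finset E)) : Set (Finset E))).Finite :=
      Set.Finite.image _ (A.powerset.finite_toSet)
    apply Set.Finite.subset himg
    rintro H ⟨⟨hHf, _⟩, _⟩
    refine ⟨A.filter (· ∈ H), ?_, ?_⟩
    · exact Finset.mem_coe.mpr (Finset.mem_powerset.mpr (A.filter_subset _))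
    · exact (convexHull_filter_eq hHf)
  obtain ⟨H, hH, hmax⟩ := Set.Finite.exists_maximalFor id 𝒮 hfin ⟨G, ⟨hG, hdisj⟩, Set.Subset.rfl⟩
  refine ⟨H, ⟨hH.1, fun K hK hHK => ?_⟩, hH.2⟩
  exact hmax ⟨hK, hH.2.trans hHK⟩ hHK

/-- Every maximal face (in the suture `S`) disjoint from `D ∩ S` has the form
`F ∩ S` for some maximal face `F` of `Conv A` disjoint from `D`. -/
lemma dfam_restrict {A : Finset E} {S D : Set E}
    (hS : IsFaceOf (convexHull ℝ (A : Set E)) S)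
    (hAS : (A.filter (· ∈ S)).Nonempty)
    {G : Set E}
    (hGmem : G ∈ DFam (convexHull ℝ ((A.filter (· ∈ S) : Finset E) : Set E)) (D ∩ S)) :
    ∃ F ∈ DFam (convexHull ℝ (A : Set E)) D, G = F ∩ S := by
  have hconvS : convexHull ℝ ((A.filter (· ∈ S) : Finset E) : Set E) = S :=
    convexHull_filter_eq hS
  obtain ⟨⟨hGface, hGdisj⟩, hGmax⟩ := hGmem
  have hGne : G.Nonempty := isFaceOf_nonempty hAS hGface
  have hGS : G ⊆ S := hconvS ▸ isFaceOf_subset hGface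
  have hGfaceP : IsFaceOf (convexHull ℝ (A : Set E)) G := isFaceOf_trans hS hAS hGface
  have hGD : G ∩ D = ∅ := by
    rw [Set.eq_empty_iff_forall_notMem]
    rintro x ⟨hxG, hxD⟩
    exact Set.eq_empty_iff_forall_notMem.mp hGdisj x ⟨hxG, hxD, hGS hxG⟩
  obtain ⟨F, hFmem, hGF⟩ := exists_maximal_face hGfaceP hGD
  refine ⟨F, hFmem, ?_⟩
  have hFSne : (F ∩ S).Nonempty := hGne.mono (Set.subset_inter hGF hGS)
  have hFSface : IsFaceOf (convexHull ℝ (A : Set E)) (F ∩ S) :=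
    isFaceOf_inter hFmem.1.1 hS hFSne
  have hFSfaceS : IsFaceOf (convexHull ℝ ((A.filter (· ∈ S) : Finset E) : Set E)) (F ∩ S) :=
    isFaceOf_face_of_subset hS hFSface Set.inter_subset_right hFSne
  have hFSdisj : (F ∩ S) ∩ (D ∩ S) = ∅ := by
    rw [Set.eq_empty_iff_forall_notMem]
    rintro x ⟨⟨hxF, _⟩, hxD, _⟩
    exact Set.eq_empty_iff_forall_notMem.mp hFmem.1.2 x ⟨hxF, hxD⟩
  have := hGmax ⟨hFSfaceS, hFSdisj⟩ (Set.subset_inter hGF hGS)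
  exact Set.Subset.antisymm (Set.subset_inter hGF hGS) this

/-- The main daughter-restriction lemma. -/
lemma isDaughter_restrict {A : Finset E} {S D : Set E}
    (hS : IsFaceOf (convexHull ℝ (A : Set E)) S)
    (hD : IsDaughter A D) (hne : (D ∩ S).Nonempty) :
    IsDaughter (A.filter (· ∈ S)) (D ∩ S) := by
  obtain ⟨x₀, hx₀D, hx₀S⟩ := hne
  have hSne : S.Nonempty := ⟨x₀, hx₀S⟩
  have hconvS : convexHull ℝ ((A.filter (· ∈ S) : Finset E) : Set E) = S :=
    convexHull_filter_eq hS
  have hAS : (A.filter (· ∈ S)).Nonempty := by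
    rw [Finset.nonempty_iff_ne_empty]
    intro h
    rw [h] at hconvS
    simp only [Finset.coe_empty, convexHull_empty] at hconvS
    exact hSne.ne_empty hconvS.symm
  refine ⟨⟨x₀, hx₀D, hx₀S⟩, ?_, ?_⟩
  · -- pairwise disjointness
    intro G₁ hG₁ G₂ hG₂ hne12
    obtain ⟨F₁, hF₁, h1⟩ := dfam_restrict hS hAS hG₁
    obtain ⟨F₂, hF₂, h2⟩ := dfam_restrict hS hAS hG₂
    subst h1; subst h2
    have hFne : F₁ ≠ F₂ := fun h => hne12 (by rw [h])
    have hdisj := hD.2.1 F₁ hF₁ F₂ hF₂ hFne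
    rw [Set.eq_empty_iff_forall_notMem]
    rintro x ⟨⟨hx1, _⟩, hx2, _⟩
    exact Set.eq_empty_iff_forall_notMem.mp hdisj x ⟨hx1, hx2⟩
  · -- the hull description
    apply Set.Subset.antisymm
    · -- D ∩ S ⊆ hull
      rintro x ⟨hxD, hxS⟩
      set U : Set E := ⋃ F ∈ DFam (convexHull ℝ (A : Set E)) D, F with hU
      set C : Finset E := A.filter (· ∉ U) with hC
      have hCcoe : (C : Set E) = (A : Set E) \ U := by
        ext a; simp [hC, Set.mem_diff]
      have hCsub : (C : Set E) ⊆ convexHull ℝ (A : Set E) := fun a ha => by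
        rw [hCcoe] at ha
        exact subset_convexHull ℝ _ ha.1
      have hxC : x ∈ convexHull ℝ (C : Set E) := by
        rw [hCcoe, hU, ← hD.2.2]
        exact hxD
      have hx' := mem_convexHull_inter_face hCsub hS hxC hxS
      refine convexHull_mono ?_ hx'
      rintro a ⟨haC, haS⟩
      rw [hCcoe] at haC
      obtain ⟨haA, haU⟩ := haC
      constructor
      · rw [coe_filter_mem]; exact ⟨haA, haS⟩
      · intro hmem
        obtain ⟨G, hG, haG⟩ := Set.mem_iUnion₂.mp hmem
        obtain ⟨F, hF, rfl⟩ := dfam_restrict hS hAS hG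
        exact haU (Set.mem_iUnion₂.mpr ⟨F, hF, haG.1⟩)
    · -- hull ⊆ D ∩ S
      have hDSconv : Convex ℝ (D ∩ S) := by
        have hDc : Convex ℝ D := hD.2.2 ▸ convex_convexHull ℝ _
        exact hDc.inter (isFaceOf_convex (convex_convexHull ℝ _) hS)
      refine convexHull_min ?_ hDSconv
      rintro a ⟨haAS, haU'⟩
      rw [coe_filter_mem] at haAS
      obtain ⟨haA, haS⟩ := haAS
      refine ⟨?_, haS⟩
      by_contra hnot
      have haU : a ∈ ⋃ F ∈ DFam (convexHull ℝ (A : Set E)) D, F := by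
        by_contra h
        exact hnot (hD.2.2 ▸ subset_convexHull ℝ _ ⟨haA, h⟩)
      obtain ⟨F, hF, haF⟩ := Set.mem_iUnion₂.mp haU
      have hFSne : (F ∩ S).Nonempty := ⟨a, haF, haS⟩
      have hFSface : IsFaceOf (convexHull ℝ (A : Set E)) (F ∩ S) :=
        isFaceOf_inter hF.1.1 hS hFSne
      have hFSfaceS : IsFaceOf (convexHull ℝ ((A.filter (· ∈ S) : Finset E) : Set E)) (F ∩ S) :=
        isFaceOf_face_of_subset hS hFSface Set.inter_subset_right hFSne
      have hFSdisj : (F ∩ S) ∩ (D ∩ S) = ∅ := by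
        rw [Set.eq_empty_iff_forall_notMem]
        rintro x ⟨⟨hxF, _⟩, hxD, _⟩
        exact Set.eq_empty_iff_forall_notMem.mp hF.1.2 x ⟨hxF, hxD⟩
      obtain ⟨G, hG, hFSG⟩ := exists_maximal_face hFSfaceS hFSdisj
      exact haU' (Set.mem_iUnion₂.mpr ⟨G, hG, hFSG ⟨haF, haS⟩⟩)

end Aux

/-- **Restriction of a semi-interlaced configuration to a suture.**
If `D 1, …, D n` are semi-interlaced daughter polytopes of `A` and `S` is a
suture, then there are exactly `dim S` indices `i` with `D i ∩ S ≠ ∅`, and the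
polytopes `D i ∩ S` (over these indices) are semi-interlaced daughter polytopes
of the finite set `A ∩ S`. -/
theorem semi_interlaced_restrict_to_suture (n : ℕ) (A : Finset (Fin n → ℝ))
    (hlat : ∀ p ∈ A, p ∈ intLattice n)
    (P : Set (Fin n → ℝ)) (hP : P = convexHull ℝ (A : Set (Fin n → ℝ)))
    (D : Fin n → Set (Fin n → ℝ))
    (hsemi : SemiInterlaced A Finset.univ D)
    (S : Set (Fin n → ℝ)) (hS : IsSuture A Finset.univ D S) :
    (Finset.univ.filter fun i => (D i ∩ S).Nonempty).card = sdim S ∧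
    SemiInterlaced (A.filter (· ∈ S))
      (Finset.univ.filter fun i => (D i ∩ S).Nonempty)
      (fun i => D i ∩ S) := by
  obtain ⟨hSface, hScard⟩ := hS
  refine ⟨hScard, ?_, ?_⟩
  · -- each D i ∩ S is a daughter of A ∩ S
    intro i hiT
    have hDiS : (D i ∩ S).Nonempty := (Finset.mem_filter.mp hiT).2
    exact isDaughter_restrict hSface (hsemi.1 i (Finset.mem_univ i)) hDiS
  · -- semi-interlacing inside S
    intro F hF
    by_cases hAS : (A.filter (· ∈ S)).Nonempty
    · have hFP : IsFaceOf (convexHull ℝ (A : Set (Fin n → ℝ))) F :=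
        isFaceOf_trans hSface hAS hF
      have hFsubS : F ⊆ S := (convexHull_filter_eq hSface) ▸ isFaceOf_subset hF
      refine (hsemi.2 F hFP).trans (Finset.card_le_card ?_)
      intro j hj
      obtain ⟨x, hxD, hxF⟩ := (Finset.mem_filter.mp hj).2
      refine Finset.mem_filter.mpr ⟨Finset.mem_filter.mpr
        ⟨Finset.mem_univ j, ⟨x, hxD, hFsubS hxF⟩⟩, ⟨x, ⟨hxD, hFsubS hxF⟩, hxF⟩⟩
    · rw [Finset.not_nonempty_iff_eq_empty] at hAS
      rw [hAS] at hF
      obtain ⟨ξ, rfl⟩ := hF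
      have h0 : sdim (∅ : Set (Fin n → ℝ)) = 0 := by
        unfold sdim
        rw [vectorSpan_empty, finrank_bot]
      simp only [Finset.coe_empty, convexHull_empty, Set.sep_empty]
      rw [h0]
      exact Nat.zero_le _

end
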